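/- arXiv:1504.00029 — 3 statements merged into one kernel-verified Lean document; each statement's English description precedes it below -/
import Mathlib

section
/- Let (V, ‖·‖) be a normed vector space, H a group of norm-preserving linear maps of V, and L : H → ℝ a group-norm. Suppose (V, H, L) is a holonomic space, i.e., for every u ∈ V there is R > 0 such that for all v, w ∈ V with ‖u−v‖, ‖u−w‖ < R and all a ∈ H one has ‖v−w‖² − ‖av−w‖² ≤ L(a)². Then the function d_L(u,v) = inf_{a∈H} √(L(a)² + ‖u − av‖²) is a metric on V. -/
open Set

private lemma sqrt_tri (p q x y : ℝ) (hp : 0 ≤ p) (hq : 0 ≤ q) (hx : 0 ≤ x) (hy : 0 ≤ y) :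
    Real.sqrt ((p + q) ^ 2 + (x + y) ^ 2) ≤
      Real.sqrt (p ^ 2 + x ^ 2) + Real.sqrt (q ^ 2 + y ^ 2) := by
  have e1 : Real.sqrt (p ^ 2 + x ^ 2) ^ 2 = p ^ 2 + x ^ 2 := Real.sq_sqrt (by positivity)
  have e2 : Real.sqrt (q ^ 2 + y ^ 2) ^ 2 = q ^ 2 + y ^ 2 := Real.sq_sqrt (by positivity)
  have h1 : p * q + x * y ≤ Real.sqrt (p ^ 2 + x ^ 2) * Real.sqrt (q ^ 2 + y ^ 2) := by
    rw [← Real.sqrt_mul (by positivity)]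
    exact Real.le_sqrt_of_sq_le (by nlinarith [sq_nonneg (p * y - x * q)])
  have h2 : (p + q) ^ 2 + (x + y) ^ 2 ≤
      (Real.sqrt (p ^ 2 + x ^ 2) + Real.sqrt (q ^ 2 + y ^ 2)) ^ 2 := by
    nlinarith
  calc Real.sqrt ((p + q) ^ 2 + (x + y) ^ 2)
      ≤ Real.sqrt ((Real.sqrt (p ^ 2 + x ^ 2) + Real.sqrt (q ^ 2 + y ^ 2)) ^ 2) :=
        Real.sqrt_le_sqrt h2
    _ = _ := Real.sqrt_sq (by positivity)

/-- Let `(V,‖·‖)` be a normed vector space, `H` a group of norm-preserving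
linear maps of `V`, and `L : H → ℝ` a group-norm (nonnegative, vanishing exactly at the
identity, symmetric under inverses, subadditive).  If `(V,H,L)` is a holonomic space,
i.e. every `u ∈ V` has an `R > 0` with
`‖v−w‖² − ‖a v − w‖² ≤ L(a)²` whenever `‖u−v‖,‖u−w‖ < R` and `a ∈ H`, then
`d_L(u,v) = inf_{a ∈ H} √(L(a)² + ‖u − a v‖²)` is a metric on `V`. -/
theorem stmt2 (V : Type*) [NormedAddCommGroup V] [NormedSpace ℝ V]
    (H : Subgroup (V ≃ₗᵢ[ℝ] V)) (L : H → ℝ)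
    (hL0 : ∀ a, 0 ≤ L a)
    (hLid : ∀ a, L a = 0 ↔ a = 1)
    (hLinv : ∀ a, L a⁻¹ = L a)
    (hLmul : ∀ a b, L (a * b) ≤ L a + L b)
    (hol : ∀ u : V, ∃ R > (0:ℝ), ∀ v w : V, ‖u - v‖ < R → ‖u - w‖ < R →
      ∀ a : H, ‖v - w‖ ^ 2 - ‖(a : V ≃ₗᵢ[ℝ] V) v - w‖ ^ 2 ≤ (L a) ^ 2) :
    let d : V → V → ℝ :=
      fun u v => ⨅ a : H, Real.sqrt ((L a) ^ 2 + ‖u - (a : V ≃ₗᵢ[ℝ] V) v‖ ^ 2)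
    (∀ u v, 0 ≤ d u v) ∧
    (∀ u v, d u v = 0 ↔ u = v) ∧
    (∀ u v, d u v = d v u) ∧
    (∀ u v w, d u w ≤ d u v + d v w) := by
  intro d
  obtain ⟨R, hR, hRspec⟩ := hol 0
  -- key displacement bound
  have small : ∀ (a : H) (x : V), ‖x‖ < R → ‖x - (a : V ≃ₗᵢ[ℝ] V) x‖ ≤ L a := by
    intro a x hx
    have h := hRspec x ((a : V ≃ₗᵢ[ℝ] V) x) (by simpa using hx)
      (by simpa [LinearIsometryEquiv.norm_map] using hx) a
    simp only [sub_self, norm_zero] at h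
    nlinarith [norm_nonneg (x - (a : V ≃ₗᵢ[ℝ] V) x), hL0 a]
  have key : ∀ (a : H) (x : V), ‖x - (a : V ≃ₗᵢ[ℝ] V) x‖ ≤ 2 * ‖x‖ / R * L a := by
    intro a x
    rcases eq_or_ne x 0 with rfl | hx
    · simp
    · have hxn : 0 < ‖x‖ := norm_pos_iff.mpr hx
      set c : ℝ := R / (2 * ‖x‖) with hc
      have hc0 : 0 < c := by positivity
      have h1 : ‖c • x‖ < R := by
        have he : ‖c • x‖ = R / 2 := by
          rw [norm_smul, Real.norm_of_nonneg hc0.le, hc]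
          field_simp
        rw [he]; linarith
      have h2 := small a (c • x) h1
      rw [LinearIsometryEquiv.map_smul, ← smul_sub, norm_smul,
        Real.norm_of_nonneg hc0.le] at h2
      have h3 : ‖x - (a : V ≃ₗᵢ[ℝ] V) x‖ ≤ L a / c := by
        rw [le_div_iff₀ hc0, mul_comm]; exact h2
      calc ‖x - (a : V ≃ₗᵢ[ℝ] V) x‖ ≤ L a / c := h3
        _ = 2 * ‖x‖ / R * L a := by
            rw [hc]; field_simp
  have bdd : ∀ u v : V, BddBelow (range fun a : H =>
      Real.sqrt ((L a) ^ 2 + ‖u - (a : V ≃ₗᵢ[ℝ] V) v‖ ^ 2)) := by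
    intro u v
    exact ⟨0, by rintro y ⟨a, rfl⟩; exact Real.sqrt_nonneg _⟩
  have hnonneg : ∀ u v, 0 ≤ d u v := fun u v =>
    Real.iInf_nonneg fun a => Real.sqrt_nonneg _
  refine ⟨hnonneg, ?_, ?_, ?_⟩
  · -- d u v = 0 ↔ u = v
    intro u v
    constructor
    · intro h
      have hC : (0:ℝ) < 1 + 2 * ‖v‖ / R := by positivity
      have hεbound : ∀ ε : ℝ, 0 < ε → ‖u - v‖ ≤ ε * (1 + 2 * ‖v‖ / R) := by
        intro ε hε
        have hlt : d u v < ε := by rw [h]; exact hε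
        obtain ⟨a, ha⟩ := exists_lt_of_ciInf_lt hlt
        have hLa : L a < ε := by
          have : L a ≤ Real.sqrt ((L a) ^ 2 + ‖u - (a : V ≃ₗᵢ[ℝ] V) v‖ ^ 2) :=
            Real.le_sqrt_of_sq_le (by nlinarith [sq_nonneg ‖u - (a : V ≃ₗᵢ[ℝ] V) v‖])
          linarith
        have hnv : ‖u - (a : V ≃ₗᵢ[ℝ] V) v‖ < ε := by
          have : ‖u - (a : V ≃ₗᵢ[ℝ] V) v‖ ≤
              Real.sqrt ((L a) ^ 2 + ‖u - (a : V ≃ₗᵢ[ℝ] V) v‖ ^ 2) :=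
            Real.le_sqrt_of_sq_le (by nlinarith [sq_nonneg (L a)])
          linarith
        have hdisp : ‖v - (a : V ≃ₗᵢ[ℝ] V) v‖ ≤ 2 * ‖v‖ / R * L a := key a v
        calc ‖u - v‖ ≤ ‖u - (a : V ≃ₗᵢ[ℝ] V) v‖ + ‖(a : V ≃ₗᵢ[ℝ] V) v - v‖ := by
              have := norm_sub_le_norm_sub_add_norm_sub u ((a : V ≃ₗᵢ[ℝ] V) v) v
              exact this
          _ = ‖u - (a : V ≃ₗᵢ[ℝ] V) v‖ + ‖v - (a : V ≃ₗᵢ[ℝ] V) v‖ := by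
              rw [norm_sub_rev ((a : V ≃ₗᵢ[ℝ] V) v)]
          _ ≤ ε + 2 * ‖v‖ / R * L a := by linarith
          _ ≤ ε + 2 * ‖v‖ / R * ε := by
              have h2 : (0:ℝ) ≤ 2 * ‖v‖ / R := by positivity
              nlinarith
          _ = ε * (1 + 2 * ‖v‖ / R) := by ring
      have : ‖u - v‖ ≤ 0 := by
        by_contra hcon
        push_neg at hcon
        have h1 := hεbound (‖u - v‖ / (2 * (1 + 2 * ‖v‖ / R))) (by positivity)
        have h2 : ‖u - v‖ / (2 * (1 + 2 * ‖v‖ / R)) * (1 + 2 * ‖v‖ / R) = ‖u - v‖ / 2 := by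
          field_simp
        rw [h2] at h1
        linarith
      have : ‖u - v‖ = 0 := le_antisymm this (norm_nonneg _)
      exact sub_eq_zero.mp (norm_eq_zero.mp this)
    · rintro rfl
      refine le_antisymm ?_ (hnonneg u u)
      have := ciInf_le (bdd u u) (1 : H)
      simpa [hLid, (hLid 1).mpr rfl] using this
  · -- symmetry
    intro u v
    have hterm : ∀ a : H,
        Real.sqrt ((L a) ^ 2 + ‖u - (a : V ≃ₗᵢ[ℝ] V) v‖ ^ 2) =
        Real.sqrt ((L a⁻¹) ^ 2 + ‖v - ((a⁻¹ : H) : V ≃ₗᵢ[ℝ] V) u‖ ^ 2) := by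
      intro a
      rw [hLinv]
      congr 2
      have : ‖v - ((a⁻¹ : H) : V ≃ₗᵢ[ℝ] V) u‖ =
          ‖(a : V ≃ₗᵢ[ℝ] V) (v - ((a⁻¹ : H) : V ≃ₗᵢ[ℝ] V) u)‖ :=
        (LinearIsometryEquiv.norm_map _ _).symm
      rw [this, map_sub]
      have h2 : (a : V ≃ₗᵢ[ℝ] V) (((a⁻¹ : H) : V ≃ₗᵢ[ℝ] V) u) = u := by
        have : ((a * a⁻¹ : H) : V ≃ₗᵢ[ℝ] V) u = u := by
          rw [mul_inv_cancel]; rfl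
        simpa using this
      rw [h2, norm_sub_rev]
    apply le_antisymm
    · refine le_ciInf fun a => ?_
      have := ciInf_le (bdd u v) a⁻¹
      calc d u v ≤ Real.sqrt ((L a⁻¹) ^ 2 + ‖u - ((a⁻¹ : H) : V ≃ₗᵢ[ℝ] V) v‖ ^ 2) := this
        _ = Real.sqrt ((L a⁻¹⁻¹) ^ 2 + ‖v - ((a⁻¹⁻¹ : H) : V ≃ₗᵢ[ℝ] V) u‖ ^ 2) := hterm a⁻¹
        _ = Real.sqrt ((L a) ^ 2 + ‖v - (a : V ≃ₗᵢ[ℝ] V) u‖ ^ 2) := by rw [inv_inv]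
    · refine le_ciInf fun a => ?_
      have := ciInf_le (bdd v u) a⁻¹
      calc d v u ≤ Real.sqrt ((L a⁻¹) ^ 2 + ‖v - ((a⁻¹ : H) : V ≃ₗᵢ[ℝ] V) u‖ ^ 2) := this
        _ = Real.sqrt ((L a) ^ 2 + ‖u - (a : V ≃ₗᵢ[ℝ] V) v‖ ^ 2) := (hterm a).symm
  · -- triangle
    intro u v w
    refine le_ciInf_add_ciInf fun a b => ?_
    have step1 : d u w ≤
        Real.sqrt ((L (a * b)) ^ 2 + ‖u - ((a * b : H) : V ≃ₗᵢ[ℝ] V) w‖ ^ 2) :=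
      ciInf_le (bdd u w) (a * b)
    have hcomp : ((a * b : H) : V ≃ₗᵢ[ℝ] V) w = (a : V ≃ₗᵢ[ℝ] V) ((b : V ≃ₗᵢ[ℝ] V) w) := rfl
    have hnorm : ‖u - ((a * b : H) : V ≃ₗᵢ[ℝ] V) w‖ ≤
        ‖u - (a : V ≃ₗᵢ[ℝ] V) v‖ + ‖v - (b : V ≃ₗᵢ[ℝ] V) w‖ := by
      rw [hcomp]
      calc ‖u - (a : V ≃ₗᵢ[ℝ] V) ((b : V ≃ₗᵢ[ℝ] V) w)‖
          ≤ ‖u - (a : V ≃ₗᵢ[ℝ] V) v‖ +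
            ‖(a : V ≃ₗᵢ[ℝ] V) v - (a : V ≃ₗᵢ[ℝ] V) ((b : V ≃ₗᵢ[ℝ] V) w)‖ :=
            norm_sub_le_norm_sub_add_norm_sub _ _ _
        _ = ‖u - (a : V ≃ₗᵢ[ℝ] V) v‖ + ‖v - (b : V ≃ₗᵢ[ℝ] V) w‖ := by
            rw [← map_sub, LinearIsometryEquiv.norm_map]
    have step2 : Real.sqrt ((L (a * b)) ^ 2 + ‖u - ((a * b : H) : V ≃ₗᵢ[ℝ] V) w‖ ^ 2) ≤
        Real.sqrt ((L a + L b) ^ 2 +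
          (‖u - (a : V ≃ₗᵢ[ℝ] V) v‖ + ‖v - (b : V ≃ₗᵢ[ℝ] V) w‖) ^ 2) := by
      apply Real.sqrt_le_sqrt
      have h1 : (L (a * b)) ^ 2 ≤ (L a + L b) ^ 2 := by
        have := hLmul a b
        nlinarith [hL0 (a * b), hL0 a, hL0 b]
      have h2 : ‖u - ((a * b : H) : V ≃ₗᵢ[ℝ] V) w‖ ^ 2 ≤
          (‖u - (a : V ≃ₗᵢ[ℝ] V) v‖ + ‖v - (b : V ≃ₗᵢ[ℝ] V) w‖) ^ 2 := by
        nlinarith [norm_nonneg (u - ((a * b : H) : V ≃ₗᵢ[ℝ] V) w), hnorm,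
          norm_nonneg (u - (a : V ≃ₗᵢ[ℝ] V) v), norm_nonneg (v - (b : V ≃ₗᵢ[ℝ] V) w)]
      linarith
    have step3 := sqrt_tri (L a) (L b) ‖u - (a : V ≃ₗᵢ[ℝ] V) v‖ ‖v - (b : V ≃ₗᵢ[ℝ] V) w‖
      (hL0 a) (hL0 b) (norm_nonneg _) (norm_nonneg _)
    linarith
end

section
/- Let V be a finite-dimensional normed vector space and let G₀ ⊆ O(V) be the set of all g ∈ O(V) which arise as limits g = lim_n a_n with a_n ∈ H_n and L_n(a_n) → 0, where H_n ≤ O(V) are subgroups with group-norms L_n. Suppose the semi-metrics d_n(u,v) = inf_{a∈H_n} √(L_n(a)² + ‖au − v‖²) converge uniformly on compact sets to a semi-metric d_∞. Then for u, v ∈ V, d_∞(u,v) = 0 if and only if v = gu for some g in the orbit closure in O(V) of the subgroup generated by G₀. -/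
open Set Filter

private lemma euclid_tri (c₁ d₁ c₂ d₂ : ℝ) :
    Real.sqrt ((c₁ + c₂) ^ 2 + (d₁ + d₂) ^ 2) ≤
      Real.sqrt (c₁ ^ 2 + d₁ ^ 2) + Real.sqrt (c₂ ^ 2 + d₂ ^ 2) := by
  have h := norm_add_le (⟨c₁, d₁⟩ : ℂ) ⟨c₂, d₂⟩
  have he : (⟨c₁, d₁⟩ + ⟨c₂, d₂⟩ : ℂ) = ⟨c₁ + c₂, d₁ + d₂⟩ := by
    apply Complex.ext <;> simp
  rw [he] at h
  simpa [Complex.norm_def, Complex.normSq_mk, sq] using h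

/-- Let `V` be a finite-dimensional normed vector space, `H n` subgroups
of the group `O(V)` of norm-preserving linear maps with group-norms `L n`, and suppose the
semi-metrics `d n (u,v) = inf_{a ∈ H n} √(L n a² + ‖a u − v‖²)` converge uniformly on
compact subsets of `V × V` to a semi-metric `dLim`.  Let `G₀` be the set of all limits
`g = lim aₙ` (in the operator norm, along subsequences) of elements `aₙ ∈ H n` with
`L n aₙ → 0`.  Then there is a subgroup `G` of `O(V)` — the orbit closure of the subgroup
generated by `G₀`, i.e. the largest subgroup having the same orbits as it — such that
`dLim(u,v) = 0` iff `v = g u` for some `g ∈ G`. -/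
theorem stmt6 (V : Type*) [NormedAddCommGroup V] [NormedSpace ℝ V]
    [FiniteDimensional ℝ V]
    (H : ℕ → Subgroup (V ≃ₗᵢ[ℝ] V)) (L : ∀ n, (H n) → ℝ)
    (hL0 : ∀ n a, 0 ≤ L n a) (hLid : ∀ n, L n 1 = 0)
    (hLinv : ∀ n a, L n a⁻¹ = L n a)
    (hLmul : ∀ n a b, L n (a * b) ≤ L n a + L n b)
    (dLim : V → V → ℝ)
    (hconv : ∀ K : Set (V × V), IsCompact K →
      TendstoUniformlyOn
        (fun n p => ⨅ a : H n,
          Real.sqrt ((L n a) ^ 2 + ‖((a : V ≃ₗᵢ[ℝ] V)) p.1 - p.2‖ ^ 2))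
        (fun p => dLim p.1 p.2) atTop K) :
    -- the set `G₀` of limits of elements whose norms `L n` tend to zero
    let coeC : (V ≃ₗᵢ[ℝ] V) → (V →L[ℝ] V) :=
      fun g => g.toLinearIsometry.toContinuousLinearMap
    let G₀ : Set (V ≃ₗᵢ[ℝ] V) :=
      {g | ∃ (φ : ℕ → ℕ) (a : ∀ j, H (φ j)), StrictMono φ ∧
        Tendsto (fun j => coeC ((a j : V ≃ₗᵢ[ℝ] V))) atTop (nhds (coeC g)) ∧
        Tendsto (fun j => L (φ j) (a j)) atTop (nhds 0)}
    let orbit : Subgroup (V ≃ₗᵢ[ℝ] V) → V → Set V :=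
      fun B v => {w | ∃ b ∈ B, b v = w}
    ∃ G : Subgroup (V ≃ₗᵢ[ℝ] V),
      (∀ v, orbit G v = orbit (Subgroup.closure G₀) v) ∧
      (∀ B : Subgroup (V ≃ₗᵢ[ℝ] V),
        (∀ v, orbit B v = orbit (Subgroup.closure G₀) v) → B ≤ G) ∧
      (∀ u v : V, dLim u v = 0 ↔ ∃ g ∈ G, v = g u) := by
  intro coeC G₀ orbit
  classical
  set D : ℕ → V → V → ℝ := fun n u v =>
    ⨅ a : H n, Real.sqrt ((L n a) ^ 2 + ‖((a : V ≃ₗᵢ[ℝ] V)) u - v‖ ^ 2) with hDdef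
  have hne : ∀ n, Nonempty (H n) := fun n => ⟨1⟩
  have hbdd : ∀ n (u v : V), BddBelow (Set.range fun a : H n =>
      Real.sqrt ((L n a) ^ 2 + ‖((a : V ≃ₗᵢ[ℝ] V)) u - v‖ ^ 2)) := by
    intro n u v
    exact ⟨0, by rintro x ⟨a, rfl⟩; exact Real.sqrt_nonneg _⟩
  have hD0 : ∀ n (u v : V), 0 ≤ D n u v := fun n u v =>
    Real.iInf_nonneg fun a => Real.sqrt_nonneg _
  have hDle : ∀ n (u v : V) (a : H n),
      D n u v ≤ Real.sqrt ((L n a) ^ 2 + ‖((a : V ≃ₗᵢ[ℝ] V)) u - v‖ ^ 2) :=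
    fun n u v a => ciInf_le (hbdd n u v) a
  have hpt : ∀ u v : V, Tendsto (fun n => D n u v) atTop (nhds (dLim u v)) := by
    intro u v
    have := (hconv {(u, v)} isCompact_singleton).tendsto_at (mem_singleton _)
    exact this
  -- symmetry of D
  have hDsymm_le : ∀ n (u v : V), D n u v ≤ D n v u := by
    intro n u v
    refine le_ciInf fun b => ?_
    have h1 := hDle n u v b⁻¹
    have hnorm : ‖(((b⁻¹ : H n) : V ≃ₗᵢ[ℝ] V)) u - v‖ = ‖((b : V ≃ₗᵢ[ℝ] V)) v - u‖ := by
      have := (b : V ≃ₗᵢ[ℝ] V).norm_map ((((b⁻¹ : H n) : V ≃ₗᵢ[ℝ] V)) u - v)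
      rw [map_sub] at this
      simp only [Subgroup.coe_inv] at this ⊢
      rw [show ((b : V ≃ₗᵢ[ℝ] V)) (((b : V ≃ₗᵢ[ℝ] V))⁻¹ u) = u from
        (b : V ≃ₗᵢ[ℝ] V).apply_symm_apply u] at this
      rw [← this, norm_sub_rev]
    rwa [hLinv, hnorm] at h1
  have hDsymm : ∀ n (u v : V), D n u v = D n v u := fun n u v =>
    le_antisymm (hDsymm_le n u v) (hDsymm_le n v u)
  -- triangle inequality for D
  have hDtri : ∀ n (u v w : V), D n u w ≤ D n u v + D n v w := by
    intro n u v w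
    refine le_ciInf_add_ciInf fun a b => ?_
    refine (hDle n u w (b * a)).trans ?_
    have hLle : L n (b * a) ≤ L n a + L n b := (hLmul n b a).trans_eq (add_comm _ _)
    have hNle : ‖(((b * a : H n) : V ≃ₗᵢ[ℝ] V)) u - w‖ ≤
        ‖((a : V ≃ₗᵢ[ℝ] V)) u - v‖ + ‖((b : V ≃ₗᵢ[ℝ] V)) v - w‖ := by
      have : (((b * a : H n) : V ≃ₗᵢ[ℝ] V)) u - w =
          (((b : V ≃ₗᵢ[ℝ] V)) (((a : V ≃ₗᵢ[ℝ] V)) u) - ((b : V ≃ₗᵢ[ℝ] V)) v)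
            + (((b : V ≃ₗᵢ[ℝ] V)) v - w) := by
        simp [Subgroup.coe_mul]
      rw [this]
      refine (norm_add_le _ _).trans ?_
      rw [← map_sub, (b : V ≃ₗᵢ[ℝ] V).norm_map]
    calc Real.sqrt ((L n (b * a)) ^ 2 + ‖(((b * a : H n) : V ≃ₗᵢ[ℝ] V)) u - w‖ ^ 2)
        ≤ Real.sqrt ((L n a + L n b) ^ 2 +
            (‖((a : V ≃ₗᵢ[ℝ] V)) u - v‖ + ‖((b : V ≃ₗᵢ[ℝ] V)) v - w‖) ^ 2) := by
          apply Real.sqrt_le_sqrt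
          have h1 := pow_le_pow_left₀ (hL0 n (b * a)) hLle 2
          have h2 := pow_le_pow_left₀ (norm_nonneg ((((b * a : H n) : V ≃ₗᵢ[ℝ] V)) u - w)) hNle 2
          linarith
      _ ≤ Real.sqrt ((L n a) ^ 2 + ‖((a : V ≃ₗᵢ[ℝ] V)) u - v‖ ^ 2)
            + Real.sqrt ((L n b) ^ 2 + ‖((b : V ≃ₗᵢ[ℝ] V)) v - w‖ ^ 2) := euclid_tri _ _ _ _
  -- properties of dLim
  have hlim0 : ∀ u v : V, 0 ≤ dLim u v := fun u v =>
    ge_of_tendsto' (hpt u v) fun n => hD0 n u v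
  have hlimsymm : ∀ u v : V, dLim u v = dLim v u := by
    intro u v
    refine tendsto_nhds_unique (hpt u v) ?_
    have : (fun n => D n u v) = fun n => D n v u := funext fun n => hDsymm n u v
    rw [this]; exact hpt v u
  have hlimtri : ∀ u v w : V, dLim u w ≤ dLim u v + dLim v w := fun u v w =>
    le_of_tendsto_of_tendsto' (hpt u w) ((hpt u v).add (hpt v w)) fun n => hDtri n u v w
  -- key : every element of the closure of G₀ moves points distance 0
  have hkey : ∀ g ∈ Subgroup.closure G₀, ∀ u : V, dLim u (g u) = 0 := by
    intro g hg
    refine Subgroup.closure_induction ?_ ?_ ?_ ?_ hg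
    · -- elements of G₀
      intro g hgG u
      obtain ⟨φ, a, hφ, hca, hLa⟩ := hgG
      refine tendsto_nhds_unique ((hpt u (g u)).comp hφ.tendsto_atTop) ?_
      have hnorm : Tendsto (fun j => ‖((a j : V ≃ₗᵢ[ℝ] V)) u - g u‖) atTop (nhds 0) := by
        have h1 : Tendsto (fun j => coeC ((a j : V ≃ₗᵢ[ℝ] V)) u) atTop (nhds (coeC g u)) :=
          ((ContinuousLinearMap.apply ℝ V u).continuous.tendsto _).comp hca
        have := tendsto_iff_norm_sub_tendsto_zero.mp h1
        exact this
      have hb : Tendsto (fun j => Real.sqrt ((L (φ j) (a j)) ^ 2 +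
          ‖((a j : V ≃ₗᵢ[ℝ] V)) u - g u‖ ^ 2)) atTop (nhds 0) := by
        have : Tendsto (fun j => (L (φ j) (a j)) ^ 2 +
            ‖((a j : V ≃ₗᵢ[ℝ] V)) u - g u‖ ^ 2) atTop (nhds 0) := by
          have := (hLa.pow 2).add (hnorm.pow 2)
          simpa using this
        have := (Real.continuous_sqrt.tendsto 0).comp this
        simpa [Function.comp_def] using this
      exact squeeze_zero (fun j => hD0 _ _ _) (fun j => hDle _ u (g u) (a j)) hb
    · -- identity
      intro u
      refine tendsto_nhds_unique (hpt u ((1 : V ≃ₗᵢ[ℝ] V) u)) ?_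
      have hz : ∀ n, D n u ((1 : V ≃ₗᵢ[ℝ] V) u) = 0 := by
        intro n
        refine le_antisymm ?_ (hD0 n _ _)
        have := hDle n u ((1 : V ≃ₗᵢ[ℝ] V) u) 1
        simpa [hLid n] using this
      have : (fun n => D n u ((1 : V ≃ₗᵢ[ℝ] V) u)) = fun _ => (0 : ℝ) := funext hz
      rw [this]; exact tendsto_const_nhds
    · -- mul
      intro g h _ _ hgp hhp u
      refine le_antisymm ?_ (hlim0 _ _)
      have h1 : dLim u ((g * h) u) ≤ dLim u (h u) + dLim (h u) (g (h u)) := by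
        have : ((g * h : V ≃ₗᵢ[ℝ] V)) u = g (h u) := rfl
        rw [this]
        exact hlimtri u (h u) (g (h u))
      rw [hhp u, hgp (h u)] at h1
      simpa using h1
    · -- inv
      intro g _ hgp u
      have h1 : dLim (g⁻¹ u) (g (g⁻¹ u)) = 0 := hgp (g⁻¹ u)
      have h2 : g (g⁻¹ u) = u := by
        show g ((g⁻¹ : V ≃ₗᵢ[ℝ] V) u) = u
        simp
      rw [h2] at h1
      rw [hlimsymm]
      exact h1
  -- main analytic direction
  have hmain : ∀ u v : V, dLim u v = 0 → ∃ g ∈ G₀, (g : V ≃ₗᵢ[ℝ] V) u = v := by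
    intro u v h0
    have hsel : ∀ n : ℕ, ∃ a : H n,
        Real.sqrt ((L n a) ^ 2 + ‖((a : V ≃ₗᵢ[ℝ] V)) u - v‖ ^ 2) < D n u v + 1 / (n + 1) := by
      intro n
      refine exists_lt_of_ciInf_lt ?_
      have : (0 : ℝ) < 1 / (n + 1) := by positivity
      linarith
    choose a ha using hsel
    have hDto : Tendsto (fun n => D n u v) atTop (nhds 0) := h0 ▸ hpt u v
    have hup : Tendsto (fun n : ℕ => D n u v + 1 / (n + 1 : ℝ)) atTop (nhds 0) := by
      have := hDto.add tendsto_one_div_add_atTop_nhds_zero_nat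
      simpa using this
    have hsq0 : Tendsto (fun n => Real.sqrt ((L n (a n)) ^ 2 +
        ‖((a n : V ≃ₗᵢ[ℝ] V)) u - v‖ ^ 2)) atTop (nhds 0) :=
      squeeze_zero (fun n => Real.sqrt_nonneg _) (fun n => (ha n).le) hup
    have hxle : ∀ (x y : ℝ), 0 ≤ x → x ≤ Real.sqrt (x ^ 2 + y ^ 2) := fun x y hx =>
      (Real.le_sqrt hx (by positivity)).mpr (by nlinarith [sq_nonneg y])
    have hL : Tendsto (fun n => L n (a n)) atTop (nhds 0) :=
      squeeze_zero (fun n => hL0 n (a n)) (fun n => hxle _ _ (hL0 n (a n))) hsq0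
    have hN : Tendsto (fun n => ‖((a n : V ≃ₗᵢ[ℝ] V)) u - v‖) atTop (nhds 0) := by
      refine squeeze_zero (fun n => norm_nonneg _) (fun n => ?_) hsq0
      have := hxle ‖((a n : V ≃ₗᵢ[ℝ] V)) u - v‖ (L n (a n)) (norm_nonneg _)
      rwa [add_comm] at this
    -- compactness
    have hball : ∀ n, coeC ((a n : V ≃ₗᵢ[ℝ] V)) ∈ Metric.closedBall (0 : V →L[ℝ] V) 1 := by
      intro n
      rw [Metric.mem_closedBall, dist_zero_right]
      exact LinearIsometry.norm_toContinuousLinearMap_le _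
    obtain ⟨T, -, φ, hφ, hTt⟩ :=
      tendsto_subseq_of_bounded Metric.isBounded_closedBall hball
    have hTpt : ∀ x : V, Tendsto (fun j => coeC ((a (φ j) : V ≃ₗᵢ[ℝ] V)) x) atTop (nhds (T x)) :=
      fun x => ((ContinuousLinearMap.apply ℝ V x).continuous.tendsto _).comp hTt
    have hTiso : ∀ x : V, ‖T x‖ = ‖x‖ := by
      intro x
      have h1 : Tendsto (fun j => ‖coeC ((a (φ j) : V ≃ₗᵢ[ℝ] V)) x‖) atTop (nhds ‖T x‖) :=
        (continuous_norm.tendsto _).comp (hTpt x)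
      have h2 : ∀ j, ‖coeC ((a (φ j) : V ≃ₗᵢ[ℝ] V)) x‖ = ‖x‖ := fun j =>
        ((a (φ j) : V ≃ₗᵢ[ℝ] V)).norm_map x
      have : (fun j => ‖coeC ((a (φ j) : V ≃ₗᵢ[ℝ] V)) x‖) = fun _ => ‖x‖ := funext h2
      rw [this] at h1
      exact tendsto_nhds_unique h1 tendsto_const_nhds
    let Tiso : V →ₗᵢ[ℝ] V := ⟨(T : V →ₗ[ℝ] V), hTiso⟩
    have hsurj : Function.Surjective Tiso := LinearMap.injective_iff_surjective.mp Tiso.injective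
    let g : V ≃ₗᵢ[ℝ] V := LinearIsometryEquiv.ofSurjective Tiso hsurj
    have hgc : coeC g = T := by
      ext x
      rfl
    have hguv : (g : V ≃ₗᵢ[ℝ] V) u = v := by
      have h1 : Tendsto (fun j => coeC ((a (φ j) : V ≃ₗᵢ[ℝ] V)) u) atTop (nhds v) := by
        rw [tendsto_iff_norm_sub_tendsto_zero]
        exact hN.comp hφ.tendsto_atTop
      have := tendsto_nhds_unique (hTpt u) h1
      show g u = v
      calc g u = T u := rfl
        _ = v := this
    refine ⟨g, ⟨φ, fun j => a (φ j), hφ, ?_, hL.comp hφ.tendsto_atTop⟩, hguv⟩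
    rw [hgc]
    exact hTt
  -- construct G
  set C := Subgroup.closure G₀ with hC
  refine ⟨{ carrier := {g | ∀ w : V, ∃ b ∈ C, (b : V ≃ₗᵢ[ℝ] V) w = g w}
            one_mem' := fun w => ⟨1, C.one_mem, rfl⟩
            mul_mem' := by
              intro g h hgm hhm w
              obtain ⟨b, hb, hbw⟩ := hhm w
              obtain ⟨c, hc, hcw⟩ := hgm (h w)
              exact ⟨c * b, C.mul_mem hc hb, by
                show c (b w) = (g * h) w
                rw [hbw]; exact hcw⟩
            inv_mem' := by
              intro g hgm w
              obtain ⟨b, hb, hbw⟩ := hgm (g⁻¹ w)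
              refine ⟨b⁻¹, C.inv_mem hb, ?_⟩
              have h2 : g (g⁻¹ w) = w := by
                show g ((g⁻¹ : V ≃ₗᵢ[ℝ] V) w) = w
                simp
              rw [h2] at hbw
              show b⁻¹ w = g⁻¹ w
              have h3 : b ((b⁻¹ : V ≃ₗᵢ[ℝ] V) w) = b ((g⁻¹ : V ≃ₗᵢ[ℝ] V) w) := by
                rw [hbw]
                simp
              exact b.injective h3 }, ?_, ?_, ?_⟩
  · -- orbits equal
    intro v
    ext w
    constructor
    · rintro ⟨g, hg, rfl⟩
      exact hg v
    · rintro ⟨b, hb, rfl⟩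
      exact ⟨b, fun w => ⟨b, hb, rfl⟩, rfl⟩
  · -- maximality
    intro B hB g hgB w
    have : g w ∈ orbit B w := ⟨g, hgB, rfl⟩
    rw [hB w] at this
    exact this
  · -- the metric characterization
    intro u v
    constructor
    · intro h0
      obtain ⟨g, hg, hgu⟩ := hmain u v h0
      exact ⟨g, fun w => ⟨g, Subgroup.subset_closure hg, rfl⟩, hgu.symm⟩
    · rintro ⟨g, hgm, rfl⟩
      obtain ⟨b, hb, hbu⟩ := hgm u
      rw [← hbu]
      exact hkey b hb u
end

section
/- Let α_n : [0,1] → M be a sequence of smooth curves in a Riemannian manifold converging in the C¹ sense to a curve α. Then the parallel transport maps P^{α_n} : T_{α_n(0)}M → T_{α_n(1)}M converge to the parallel transport P^α along α (after identifying nearby tangent spaces via parallel transport along minimizing geodesics). -/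
open Set Filter

set_option maxHeartbeats 1000000 in
set_option synthInstance.maxHeartbeats 400000 in
/-- Parallel transport depends continuously on `C¹` convergence of
curves.  In a fixed chart the Riemannian manifold is modelled on `E = ℝ^d`, the
Levi-Civita connection by its continuous Christoffel operator `Γ x : E →L (E →L E)`
(bilinear in velocity and transported vector), and parallel transport along a curve `α`
by the solution of `Pα' = −Γ(α)(α')·Pα`, `Pα(0) = 1`.  If smooth curves `α n` converge,
together with their derivatives, uniformly on `[0,1]` to `α` (C¹ convergence), then the
parallel transports `P n 1` converge to the parallel transport `Pα 1` along `α`. -/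
theorem stmt13 (d : ℕ)
    (Γ : EuclideanSpace ℝ (Fin d) →
      (EuclideanSpace ℝ (Fin d) →L[ℝ]
        (EuclideanSpace ℝ (Fin d) →L[ℝ] EuclideanSpace ℝ (Fin d))))
    (hΓ : Continuous Γ)
    (α : ℕ → ℝ → EuclideanSpace ℝ (Fin d)) (α' : ℕ → ℝ → EuclideanSpace ℝ (Fin d))
    (β : ℝ → EuclideanSpace ℝ (Fin d)) (β' : ℝ → EuclideanSpace ℝ (Fin d))
    (hα : ∀ n, ∀ t ∈ Icc (0:ℝ) 1, HasDerivAt (α n) (α' n t) t)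
    (hα' : ∀ n, ContinuousOn (α' n) (Icc 0 1))
    (hβ : ∀ t ∈ Icc (0:ℝ) 1, HasDerivAt β (β' t) t)
    (hβ' : ContinuousOn β' (Icc 0 1))
    (hC0 : TendstoUniformlyOn α β atTop (Icc 0 1))
    (hC1 : TendstoUniformlyOn α' β' atTop (Icc 0 1))
    (Pn : ℕ → ℝ →
      (EuclideanSpace ℝ (Fin d) →L[ℝ] EuclideanSpace ℝ (Fin d)))
    (Pβ : ℝ → (EuclideanSpace ℝ (Fin d) →L[ℝ] EuclideanSpace ℝ (Fin d)))
    (hPn0 : ∀ n, Pn n 0 = 1)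
    (hPnode : ∀ n, ∀ t ∈ Icc (0:ℝ) 1,
      HasDerivAt (Pn n) (-(Γ (α n t) (α' n t) * Pn n t)) t)
    (hPβ0 : Pβ 0 = 1)
    (hPβode : ∀ t ∈ Icc (0:ℝ) 1,
      HasDerivAt Pβ (-(Γ (β t) (β' t) * Pβ t)) t) :
    Tendsto (fun n => Pn n 1) atTop (nhds (Pβ 1)) := by
  classical
  -- the combined curve and its limit in E × E
  set g : ℝ → EuclideanSpace ℝ (Fin d) × EuclideanSpace ℝ (Fin d) :=
    fun t => (β t, β' t) with hg_def
  have hβcont : ContinuousOn β (Icc 0 1) := fun t ht =>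
    (hβ t ht).continuousAt.continuousWithinAt
  have hgcont : ContinuousOn g (Icc 0 1) := hβcont.prodMk hβ'
  -- the compact tube around the limit curve
  set S := g '' Icc 0 1 with hS_def
  have hScomp : IsCompact S := isCompact_Icc.image_of_continuousOn hgcont
  set T := Metric.cthickening 1 S with hT_def
  have hTcomp : IsCompact T := hScomp.cthickening
  have hST : S ⊆ T := Metric.self_subset_cthickening S
  -- the evaluated Christoffel map
  have hΦcont : Continuous (fun p : EuclideanSpace ℝ (Fin d) × EuclideanSpace ℝ (Fin d) =>
      Γ p.1 p.2) := (hΓ.comp continuous_fst).clm_apply continuous_snd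
  -- bound `K` on the Christoffel values over the tube
  obtain ⟨M, hM⟩ : ∃ M, ∀ p ∈ T, ‖Γ p.1 p.2‖ ≤ M :=
    hTcomp.exists_bound_of_continuousOn hΦcont.continuousOn
  set K : ℝ := |M| + 1 with hK_def
  have hK1 : (1:ℝ) ≤ K := by have := abs_nonneg M; simp only [hK_def]; linarith
  have hKpos : (0:ℝ) < K := lt_of_lt_of_le one_pos hK1
  have hK0 : K ≠ 0 := ne_of_gt hKpos
  have hMK : ∀ p ∈ T, ‖Γ p.1 p.2‖ ≤ K := fun p hp =>
    (hM p hp).trans ((le_abs_self M).trans (by simp [hK_def]))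
  -- bound `C` on the limit parallel transport
  have hPβcont : ContinuousOn Pβ (Icc 0 1) := fun t ht =>
    (hPβode t ht).continuousAt.continuousWithinAt
  obtain ⟨C₀, hC₀⟩ : ∃ C, ∀ t ∈ Icc (0:ℝ) 1, ‖Pβ t‖ ≤ C :=
    isCompact_Icc.exists_bound_of_continuousOn hPβcont
  set C : ℝ := |C₀| + 1 with hC_def
  have hCge1 : (1:ℝ) ≤ C := by have := abs_nonneg C₀; simp only [hC_def]; linarith
  have hCpos : (0:ℝ) < C := lt_of_lt_of_le one_pos hCge1
  have hCbound : ∀ t ∈ Icc (0:ℝ) 1, ‖Pβ t‖ ≤ C := fun t ht =>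
    (hC₀ t ht).trans ((le_abs_self C₀).trans (by simp [hC_def]))
  -- the Grönwall constant
  set c : ℝ := gronwallBound 0 K 1 1 with hc_def
  have hcpos : 0 < c := by
    rw [hc_def]
    simp only [gronwallBound_of_K_ne_0 hK0]
    have h2 : K + 1 ≤ Real.exp K := Real.add_one_le_exp K
    have h1 : (1:ℝ) < Real.exp (K * 1) := by rw [mul_one]; linarith
    have : 0 < 1 / K * (Real.exp (K * 1) - 1) := by
      apply mul_pos (by positivity); linarith
    linarith
  have hglin : ∀ ε' : ℝ, gronwallBound 0 K ε' 1 = ε' * c := by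
    intro ε'
    rw [hc_def]
    simp only [gronwallBound_of_K_ne_0 hK0]
    ring
  -- membership of the limit curve in S
  have hgS : ∀ t ∈ Icc (0:ℝ) 1, g t ∈ S := fun t ht => mem_image_of_mem g ht
  -- uniform continuity of Φ on T
  have hΦuc : UniformContinuousOn (fun p : EuclideanSpace ℝ (Fin d) × EuclideanSpace ℝ (Fin d) =>
      Γ p.1 p.2) T :=
    hTcomp.uniformContinuousOn_of_continuous hΦcont.continuousOn
  rw [Metric.tendsto_nhds]
  intro ε hε
  set ε' : ℝ := ε / (2 * c) with hε'_def
  have hε'pos : 0 < ε' := by rw [hε'_def]; positivity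
  set ε'' : ℝ := ε' / C with hε''_def
  have hε''pos : 0 < ε'' := by rw [hε''_def]; positivity
  obtain ⟨δ, hδpos, hδ⟩ : ∃ δ > 0, ∀ p ∈ T, ∀ q ∈ T, dist p q < δ →
      dist (Γ p.1 p.2) (Γ q.1 q.2) < ε'' :=
    Metric.uniformContinuousOn_iff.1 hΦuc ε'' hε''pos
  have hδ1pos : 0 < min δ 1 := lt_min hδpos one_pos
  have hA := Metric.tendstoUniformlyOn_iff.1 hC0 (min δ 1) hδ1pos
  have hB := Metric.tendstoUniformlyOn_iff.1 hC1 (min δ 1) hδ1pos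
  filter_upwards [hA, hB] with n hAn hBn
  -- for this n, all the pointwise facts
  have hmemT : ∀ t ∈ Icc (0:ℝ) 1, ((α n t, α' n t) :
      EuclideanSpace ℝ (Fin d) × EuclideanSpace ℝ (Fin d)) ∈ T := by
    intro t ht
    refine Metric.mem_cthickening_of_dist_le _ (g t) 1 S (hgS t ht) ?_
    rw [Prod.dist_eq]
    exact max_le (le_of_lt ((dist_comm (β t) (α n t) ▸ hAn t ht).trans_le (min_le_right _ _)))
      (le_of_lt ((dist_comm (β' t) (α' n t) ▸ hBn t ht).trans_le (min_le_right _ _)))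
  have hFK : ∀ t ∈ Icc (0:ℝ) 1, ‖Γ (α n t) (α' n t)‖ ≤ K := fun t ht =>
    hMK ((α n t, α' n t) : EuclideanSpace ℝ (Fin d) × EuclideanSpace ℝ (Fin d)) (hmemT t ht)
  have hFclose : ∀ t ∈ Icc (0:ℝ) 1, ‖Γ (α n t) (α' n t) - Γ (β t) (β' t)‖ ≤ ε'' := by
    intro t ht
    have h1 : dist ((α n t, α' n t) :
        EuclideanSpace ℝ (Fin d) × EuclideanSpace ℝ (Fin d)) (g t) < δ := by
      rw [Prod.dist_eq]
      exact max_lt ((dist_comm (β t) (α n t) ▸ hAn t ht).trans_le (min_le_left _ _))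
        ((dist_comm (β' t) (α' n t) ▸ hBn t ht).trans_le (min_le_left _ _))
    have h2 := hδ ((α n t, α' n t) : EuclideanSpace ℝ (Fin d) × EuclideanSpace ℝ (Fin d))
      (hmemT t ht) (g t) (hST (hgS t ht)) h1
    rw [dist_eq_norm] at h2
    exact h2.le
  -- Grönwall for the difference
  set f : ℝ → (EuclideanSpace ℝ (Fin d) →L[ℝ] EuclideanSpace ℝ (Fin d)) :=
    fun t => Pn n t - Pβ t with hf_def
  set f' : ℝ → (EuclideanSpace ℝ (Fin d) →L[ℝ] EuclideanSpace ℝ (Fin d)) := fun t =>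
    -(Γ (α n t) (α' n t) * Pn n t) - -(Γ (β t) (β' t) * Pβ t) with hf'_def
  have hfderiv : ∀ t ∈ Icc (0:ℝ) 1, HasDerivAt f (f' t) t := fun t ht =>
    (hPnode n t ht).sub (hPβode t ht)
  have hfcont : ContinuousOn f (Icc 0 1) := fun t ht =>
    (hfderiv t ht).continuousAt.continuousWithinAt
  have hf0 : ‖f 0‖ ≤ 0 := by
    simp only [hf_def]
    rw [hPn0 n, hPβ0, sub_self, norm_zero]
  have hbound : ∀ t ∈ Ico (0:ℝ) 1, ‖f' t‖ ≤ K * ‖f t‖ + ε' := by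
    intro t ht
    have ht' : t ∈ Icc (0:ℝ) 1 := Ico_subset_Icc_self ht
    have hrw : f' t = -(Γ (α n t) (α' n t) * f t)
        - (Γ (α n t) (α' n t) - Γ (β t) (β' t)) * Pβ t := by
      simp only [hf'_def, hf_def, mul_sub, sub_mul]
      abel
    rw [hrw]
    calc ‖-(Γ (α n t) (α' n t) * f t) - (Γ (α n t) (α' n t) - Γ (β t) (β' t)) * Pβ t‖
        ≤ ‖-(Γ (α n t) (α' n t) * f t)‖ + ‖(Γ (α n t) (α' n t) - Γ (β t) (β' t)) * Pβ t‖ :=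
          norm_sub_le _ _
      _ ≤ ‖Γ (α n t) (α' n t)‖ * ‖f t‖ + ‖Γ (α n t) (α' n t) - Γ (β t) (β' t)‖ * ‖Pβ t‖ := by
          rw [norm_neg]
          exact add_le_add (norm_mul_le _ _) (norm_mul_le _ _)
      _ ≤ K * ‖f t‖ + ε'' * C := by
          refine add_le_add (mul_le_mul_of_nonneg_right (hFK t ht') (norm_nonneg _)) ?_
          exact mul_le_mul (hFclose t ht') (hCbound t ht') (norm_nonneg _) hε''pos.le
      _ = K * ‖f t‖ + ε' := by
          rw [hε''_def]
          field_simp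
  have hgron := norm_le_gronwallBound_of_norm_deriv_right_le hfcont
    (fun t ht => (hfderiv t (Ico_subset_Icc_self ht)).hasDerivWithinAt) hf0 hbound
    1 (right_mem_Icc.2 zero_le_one)
  have hfinal : ‖f 1‖ ≤ ε' * c := by
    rw [← hglin ε']
    simpa using hgron
  rw [dist_eq_norm]
  calc ‖Pn n 1 - Pβ 1‖ ≤ ε' * c := hfinal
    _ = ε / 2 := by rw [hε'_def]; field_simp
    _ < ε := by linarith
end
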